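/- There exists a constant C' depending only on C, β, m, m', k such that for every Borel measurable f : ℝ^d → ℝ with |f(y)| ≤ C(1+|y|^β) for all y, one has ∫_0^∞ |∫ f dμ_t^x − ∫ f dμ| dt ≤ C'(1+|x|^{m'}) for every x ∈ ℝ^d; in particular the map t ↦ |∫ f dμ_t^x − ∫ f dμ| is integrable on [0,∞) for every x. -/

import Mathlib

open MeasureTheory Set

/-- Total variation norm of the difference of two (finite) measures:
`‖μ - ν‖ = sup_E (μ E - ν E) + sup_E (ν E - μ E)` over measurable sets `E`. -/
noncomputable def tvNorm {α : Type*} [MeasurableSpace α] (μ ν : Measure α) : ℝ :=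
  (⨆ (E : Set α) (_ : MeasurableSet E), (μ E - ν E)).toReal +
  (⨆ (E : Set α) (_ : MeasurableSet E), (ν E - μ E)).toReal

section TV
variable {α : Type*} [MeasurableSpace α]

lemma tv_sup_le (ν₁ ν₂ : Measure α) [IsFiniteMeasure ν₁] :
    (⨆ (E : Set α) (_ : MeasurableSet E), (ν₁ E - ν₂ E)) ≤ ν₁ univ := by
  refine iSup_le fun E => iSup_le fun _ => ?_
  exact le_trans tsub_le_self (measure_mono (subset_univ E))

lemma abs_integral_sub_le_tvNorm (ν₁ ν₂ : Measure α) [IsFiniteMeasure ν₁] [IsFiniteMeasure ν₂]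
    {g : α → ℝ} (hg : Measurable g) {B : ℝ} (hB : 0 ≤ B) (hbd : ∀ y, |g y| ≤ B) :
    |(∫ y, g y ∂ν₁) - ∫ y, g y ∂ν₂| ≤ B * tvNorm ν₁ ν₂ := by
  set s : SignedMeasure α := ν₁.toSignedMeasure - ν₂.toSignedMeasure with hs_def
  set p := s.toJordanDecomposition.posPart with hp_def
  set n := s.toJordanDecomposition.negPart with hn_def
  have hsE : ∀ E : Set α, MeasurableSet E →
      (ν₁ E).toReal - (ν₂ E).toReal = (p E).toReal - (n E).toReal := by
    intro E hE
    have h1 : s E = (ν₁ E).toReal - (ν₂ E).toReal :=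
      Measure.toSignedMeasure_sub_apply hE
    have h2 : s E = (p E).toReal - (n E).toReal := by
      conv_lhs => rw [← s.toSignedMeasure_toJordanDecomposition]
      exact Measure.toSignedMeasure_sub_apply hE
    linarith
  have key : ∀ E : Set α, MeasurableSet E → ν₁ E + n E = ν₂ E + p E := by
    intro E hE
    have h := hsE E hE
    have f1 : ν₁ E ≠ ⊤ := measure_ne_top _ _
    have f2 : ν₂ E ≠ ⊤ := measure_ne_top _ _
    have f3 : p E ≠ ⊤ := measure_ne_top _ _
    have f4 : n E ≠ ⊤ := measure_ne_top _ _
    have h' : (ν₁ E).toReal + (n E).toReal = (ν₂ E).toReal + (p E).toReal := by linarith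
    rw [← ENNReal.toReal_add f1 f4, ← ENNReal.toReal_add f2 f3] at h'
    exact (ENNReal.toReal_eq_toReal_iff' (by finiteness) (by finiteness)).mp h'
  have keyM : ν₁ + n = ν₂ + p := by
    ext E hE; simpa only [Measure.add_apply] using key E hE
  have hint : ∀ (ν : Measure α) [IsFiniteMeasure ν], Integrable g ν := by
    intro ν _
    exact Integrable.mono' (integrable_const B) hg.aestronglyMeasurable
      (Filter.Eventually.of_forall fun y => by simpa using hbd y)
  have hintsum : (∫ y, g y ∂ν₁) - ∫ y, g y ∂ν₂ = (∫ y, g y ∂p) - ∫ y, g y ∂n := by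
    have h1 : (∫ y, g y ∂ν₁) + ∫ y, g y ∂n = (∫ y, g y ∂ν₂) + ∫ y, g y ∂p := by
      rw [← integral_add_measure (hint ν₁) (hint n), ← integral_add_measure (hint ν₂) (hint p),
        keyM]
    linarith
  have habs : ∀ (ν : Measure α) [IsFiniteMeasure ν], |∫ y, g y ∂ν| ≤ B * (ν univ).toReal := by
    intro ν _
    calc |∫ y, g y ∂ν| ≤ ∫ y, |g y| ∂ν := by
          simpa [Real.norm_eq_abs] using norm_integral_le_integral_norm (μ := ν) g
      _ ≤ ∫ _, B ∂ν := integral_mono (hint ν).abs (integrable_const B) (fun y => hbd y)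
      _ = B * (ν univ).toReal := by simp [integral_const]; exact mul_comm _ _
  obtain ⟨S, hSm, hpS, hnS⟩ := s.toJordanDecomposition.mutuallySingular
  set a := ⨆ (E : Set α) (_ : MeasurableSet E), (ν₁ E - ν₂ E) with ha_def
  set b := ⨆ (E : Set α) (_ : MeasurableSet E), (ν₂ E - ν₁ E) with hb_def
  have ha_ne : a ≠ ⊤ := (lt_of_le_of_lt (tv_sup_le ν₁ ν₂) (measure_lt_top _ _)).ne
  have hb_ne : b ≠ ⊤ := (lt_of_le_of_lt (tv_sup_le ν₂ ν₁) (measure_lt_top _ _)).ne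
  have hp2 : (p univ).toReal ≤ a.toReal := by
    have hcompl : p Sᶜ = p univ := by
      have := measure_add_measure_compl (μ := p) hSm
      rw [hpS, zero_add] at this; exact this
    have h1 : ν₁ Sᶜ = ν₂ Sᶜ + p Sᶜ := by
      have := key Sᶜ hSm.compl
      rwa [hnS, add_zero] at this
    have h2 : ν₁ Sᶜ - ν₂ Sᶜ = p univ := by
      rw [h1, ENNReal.add_sub_cancel_left (measure_ne_top _ _), hcompl]
    refine ENNReal.toReal_mono ha_ne ?_
    rw [← h2]
    exact le_iSup₂ (f := fun E (_ : MeasurableSet E) => ν₁ E - ν₂ E) Sᶜ hSm.compl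
  have hn2 : (n univ).toReal ≤ b.toReal := by
    have hcompl : n S = n univ := by
      have := measure_add_measure_compl (μ := n) hSm
      rw [hnS, add_zero] at this; exact this
    have h1 : ν₂ S = ν₁ S + n S := by
      have := key S hSm
      rw [hpS, add_zero] at this; exact this.symm
    have h2 : ν₂ S - ν₁ S = n univ := by
      rw [h1, ENNReal.add_sub_cancel_left (measure_ne_top _ _), hcompl]
    refine ENNReal.toReal_mono hb_ne ?_
    rw [← h2]
    exact le_iSup₂ (f := fun E (_ : MeasurableSet E) => ν₂ E - ν₁ E) S hSm
  calc |(∫ y, g y ∂ν₁) - ∫ y, g y ∂ν₂| = |(∫ y, g y ∂p) - ∫ y, g y ∂n| := by rw [hintsum]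
    _ ≤ |∫ y, g y ∂p| + |∫ y, g y ∂n| := abs_sub _ _
    _ ≤ B * (p univ).toReal + B * (n univ).toReal := add_le_add (habs p) (habs n)
    _ ≤ B * a.toReal + B * b.toReal := by
        exact add_le_add (mul_le_mul_of_nonneg_left hp2 hB) (mul_le_mul_of_nonneg_left hn2 hB)
    _ = B * tvNorm ν₁ ν₂ := by rw [tvNorm]; ring
end TV

section PerT
variable {α : Type*} [MeasurableSpace α] [NormedAddCommGroup α] [OpensMeasurableSpace α]

lemma norm_rpow_meas {m : ℝ} (hm : 0 ≤ m) : Measurable fun y : α => ‖y‖ ^ m :=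
  (Real.continuous_rpow_const hm).measurable.comp measurable_norm

lemma moment_integrable (ν : Measure α) [IsFiniteMeasure ν] {m M : ℝ} (hm : 0 ≤ m)
    (hmom : ∫⁻ y, ENNReal.ofReal (‖y‖ ^ m) ∂ν ≤ ENNReal.ofReal M) :
    Integrable (fun y => ‖y‖ ^ m) ν := by
  refine ⟨(norm_rpow_meas hm).aestronglyMeasurable, ?_⟩
  rw [hasFiniteIntegral_iff_norm]
  have heq : ∀ y : α, ENNReal.ofReal ‖‖y‖ ^ m‖ = ENNReal.ofReal (‖y‖ ^ m) := by
    intro y; rw [Real.norm_eq_abs, abs_of_nonneg (Real.rpow_nonneg (norm_nonneg _) _)]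
  simp_rw [heq]
  exact lt_of_le_of_lt hmom ENNReal.ofReal_lt_top

lemma moment_real (ν : Measure α) [IsFiniteMeasure ν] {m M : ℝ} (hm : 0 ≤ m) (hM : 0 ≤ M)
    (hmom : ∫⁻ y, ENNReal.ofReal (‖y‖ ^ m) ∂ν ≤ ENNReal.ofReal M) :
    ∫ y, ‖y‖ ^ m ∂ν ≤ M := by
  have hI := moment_integrable ν hm hmom
  have heq := ofReal_integral_eq_lintegral_ofReal hI
    (Filter.Eventually.of_forall fun y => Real.rpow_nonneg (norm_nonneg _) _)
  rw [← ENNReal.ofReal_le_ofReal_iff hM, heq]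
  exact hmom

lemma integrable_of_growth (ν : Measure α) [IsFiniteMeasure ν] {C β m M : ℝ}
    (hC : 0 < C) (hβ : 0 ≤ β) (hβm : β ≤ m)
    (hmom : ∫⁻ y, ENNReal.ofReal (‖y‖ ^ m) ∂ν ≤ ENNReal.ofReal M)
    {f : α → ℝ} (hf : Measurable f) (hfb : ∀ y, |f y| ≤ C * (1 + ‖y‖ ^ β)) :
    Integrable f ν := by
  have hm : 0 ≤ m := le_trans hβ hβm
  refine Integrable.mono' ((integrable_const (2 * C)).add
    ((moment_integrable ν hm hmom).const_mul C)) hf.aestronglyMeasurable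
    (Filter.Eventually.of_forall fun y => ?_)
  have h1 : ‖y‖ ^ β ≤ 1 + ‖y‖ ^ m := by
    rcases le_or_gt ‖y‖ 1 with h | h
    · have := Real.rpow_le_one (norm_nonneg _) h hβ
      nlinarith [Real.rpow_nonneg (norm_nonneg y) m]
    · have := Real.rpow_le_rpow_of_exponent_le h.le hβm
      nlinarith
  rw [Real.norm_eq_abs]
  calc |f y| ≤ C * (1 + ‖y‖ ^ β) := hfb y
    _ ≤ C * (2 + ‖y‖ ^ m) := by nlinarith
    _ = 2 * C + C * ‖y‖ ^ m := by ring

lemma per_t (ν₁ ν₂ : Measure α) [IsProbabilityMeasure ν₁] [IsProbabilityMeasure ν₂]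
    {C β m M₁ M₂ τ R : ℝ} (hC : 1 ≤ C) (hβ : 0 ≤ β) (hβm : β < m) (hR : 1 ≤ R)
    (hM₁ : 0 ≤ M₁) (hM₂ : 0 ≤ M₂)
    (hmom₁ : ∫⁻ y, ENNReal.ofReal (‖y‖ ^ m) ∂ν₁ ≤ ENNReal.ofReal M₁)
    (hmom₂ : ∫⁻ y, ENNReal.ofReal (‖y‖ ^ m) ∂ν₂ ≤ ENNReal.ofReal M₂)
    (hτ : tvNorm ν₁ ν₂ ≤ τ)
    {f : α → ℝ} (hf : Measurable f) (hfb : ∀ y, |f y| ≤ C * (1 + ‖y‖ ^ β)) :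
    |(∫ y, f y ∂ν₁) - ∫ y, f y ∂ν₂|
      ≤ (2 * C * R ^ β) * τ + (2 * C * R ^ (β - m)) * (M₁ + M₂) := by
  have hC0 : 0 < C := lt_of_lt_of_le one_pos hC
  have hR0 : 0 < R := lt_of_lt_of_le one_pos hR
  have hm : 0 ≤ m := le_trans hβ hβm.le
  have hτ0 : 0 ≤ τ := le_trans (by unfold tvNorm; positivity) hτ
  set Sball : Set α := {y | ‖y‖ ≤ R} with hSball
  have hSm : MeasurableSet Sball := measurableSet_le measurable_norm measurable_const
  set g : α → ℝ := Sball.indicator f with hg_def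
  set h : α → ℝ := Sballᶜ.indicator f with hh_def
  have hgmeas : Measurable g := hf.indicator hSm
  have hhmeas : Measurable h := hf.indicator hSm.compl
  have hfint₁ : Integrable f ν₁ := integrable_of_growth ν₁ hC0 hβ hβm.le hmom₁ hf hfb
  have hfint₂ : Integrable f ν₂ := integrable_of_growth ν₂ hC0 hβ hβm.le hmom₂ hf hfb
  have hsplit : ∀ (ν : Measure α), Integrable f ν →
      ∫ y, f y ∂ν = (∫ y, g y ∂ν) + ∫ y, h y ∂ν := by
    intro ν hint
    rw [← integral_add (hint.indicator hSm) (hint.indicator hSm.compl)]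
    congr 1
    funext y
    exact (congrFun (Set.indicator_self_add_compl Sball f) y).symm
  have hRβ1 : (1:ℝ) ≤ R ^ β := Real.one_le_rpow hR hβ
  have hgbd : ∀ y, |g y| ≤ 2 * C * R ^ β := by
    intro y
    by_cases hy : y ∈ Sball
    · rw [hg_def, Set.indicator_of_mem hy]
      have hyR : ‖y‖ ^ β ≤ R ^ β := Real.rpow_le_rpow (norm_nonneg _) hy hβ
      calc |f y| ≤ C * (1 + ‖y‖ ^ β) := hfb y
        _ ≤ C * (R ^ β + R ^ β) := by nlinarith
        _ = 2 * C * R ^ β := by ring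
    · rw [hg_def, Set.indicator_of_notMem hy]
      simp only [abs_zero]
      positivity
  have hhbd : ∀ y, |h y| ≤ (2 * C * R ^ (β - m)) * ‖y‖ ^ m := by
    intro y
    by_cases hy : y ∈ Sballᶜ
    · have hyR : R < ‖y‖ := not_le.mp hy
      have hy1 : (1:ℝ) ≤ ‖y‖ := le_trans hR hyR.le
      have hy0 : (0:ℝ) < ‖y‖ := lt_of_lt_of_le one_pos hy1
      rw [hh_def, Set.indicator_of_mem hy]
      have h1 : (1:ℝ) ≤ ‖y‖ ^ β := Real.one_le_rpow hy1 hβ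
      have h2 : ‖y‖ ^ β = ‖y‖ ^ (β - m) * ‖y‖ ^ m := by
        rw [← Real.rpow_add hy0]; ring_nf
      have h3 : ‖y‖ ^ (β - m) ≤ R ^ (β - m) :=
        Real.rpow_le_rpow_of_nonpos hR0 hyR.le (by linarith)
      have h4 : (0:ℝ) ≤ ‖y‖ ^ m := Real.rpow_nonneg (norm_nonneg _) _
      calc |f y| ≤ C * (1 + ‖y‖ ^ β) := hfb y
        _ ≤ 2 * C * ‖y‖ ^ β := by nlinarith
        _ = 2 * C * (‖y‖ ^ (β - m) * ‖y‖ ^ m) := by rw [h2]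
        _ ≤ 2 * C * (R ^ (β - m) * ‖y‖ ^ m) := by
            have : ‖y‖ ^ (β - m) * ‖y‖ ^ m ≤ R ^ (β - m) * ‖y‖ ^ m :=
              mul_le_mul_of_nonneg_right h3 h4
            nlinarith
        _ = (2 * C * R ^ (β - m)) * ‖y‖ ^ m := by ring
    · rw [hh_def, Set.indicator_of_notMem hy]
      simp only [abs_zero]
      positivity
  have hhint : ∀ (ν : Measure α) [IsProbabilityMeasure ν] (M : ℝ), 0 ≤ M → Integrable f ν →
      (∫⁻ y, ENNReal.ofReal (‖y‖ ^ m) ∂ν ≤ ENNReal.ofReal M) →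
      |∫ y, h y ∂ν| ≤ (2 * C * R ^ (β - m)) * M := by
    intro ν _ M hM hint hmom
    have hint_h : Integrable h ν := hint.indicator hSm.compl
    have hint_rhs : Integrable (fun y => (2 * C * R ^ (β - m)) * ‖y‖ ^ m) ν :=
      (moment_integrable ν hm hmom).const_mul _
    calc |∫ y, h y ∂ν| ≤ ∫ y, |h y| ∂ν := by
          simpa [Real.norm_eq_abs] using norm_integral_le_integral_norm (μ := ν) h
      _ ≤ ∫ y, (2 * C * R ^ (β - m)) * ‖y‖ ^ m ∂ν :=
          integral_mono hint_h.abs hint_rhs hhbd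
      _ = (2 * C * R ^ (β - m)) * ∫ y, ‖y‖ ^ m ∂ν := integral_const_mul _ _
      _ ≤ (2 * C * R ^ (β - m)) * M := by
          have := moment_real ν hm hM hmom
          have hpos : (0:ℝ) ≤ 2 * C * R ^ (β - m) := by positivity
          exact mul_le_mul_of_nonneg_left this hpos
  have hgtv : |(∫ y, g y ∂ν₁) - ∫ y, g y ∂ν₂| ≤ (2 * C * R ^ β) * tvNorm ν₁ ν₂ :=
    abs_integral_sub_le_tvNorm ν₁ ν₂ hgmeas (by positivity) hgbd
  have hh₁ := hhint ν₁ M₁ hM₁ hfint₁ hmom₁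
  have hh₂ := hhint ν₂ M₂ hM₂ hfint₂ hmom₂
  have htv_nonneg : (0:ℝ) ≤ 2 * C * R ^ β := by positivity
  calc |(∫ y, f y ∂ν₁) - ∫ y, f y ∂ν₂|
      = |((∫ y, g y ∂ν₁) - ∫ y, g y ∂ν₂) + ((∫ y, h y ∂ν₁) - ∫ y, h y ∂ν₂)| := by
        rw [hsplit ν₁ hfint₁, hsplit ν₂ hfint₂]; ring_nf
    _ ≤ |(∫ y, g y ∂ν₁) - ∫ y, g y ∂ν₂| + |(∫ y, h y ∂ν₁) - ∫ y, h y ∂ν₂| := abs_add_le _ _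
    _ ≤ (2 * C * R ^ β) * tvNorm ν₁ ν₂ + (|∫ y, h y ∂ν₁| + |∫ y, h y ∂ν₂|) :=
        add_le_add hgtv (abs_sub _ _)
    _ ≤ (2 * C * R ^ β) * τ + ((2 * C * R ^ (β - m)) * M₁ + (2 * C * R ^ (β - m)) * M₂) :=
        add_le_add (mul_le_mul_of_nonneg_left hτ htv_nonneg) (add_le_add hh₁ hh₂)
    _ = (2 * C * R ^ β) * τ + (2 * C * R ^ (β - m)) * (M₁ + M₂) := by ring
end PerT

lemma exp_aux1 (k β m : ℝ) (hm : m ≠ 0) :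
    (k + 1) / m * β + -(k + 1) = -((k + 1) * (1 - β / m)) := by
  field_simp; ring

lemma exp_aux2 (k β m : ℝ) (hm : m ≠ 0) :
    (k + 1) / m * (β - m) = -((k + 1) * (1 - β / m)) := by
  field_simp; ring

lemma integrable_one_add_rpow {a : ℝ} (ha : 1 < a) :
    IntegrableOn (fun t : ℝ => (1 + t) ^ (-a)) (Ioi (0:ℝ)) := by
  have hmeas : Measurable fun t : ℝ => (1 + t) ^ (-a) := by fun_prop
  have h1 : IntegrableOn (fun t : ℝ => (1 + t) ^ (-a)) (Ioc (0:ℝ) 1) := by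
    refine Integrable.mono' (integrable_const 1) hmeas.aestronglyMeasurable.restrict ?_
    filter_upwards [ae_restrict_mem measurableSet_Ioc] with t ht
    rw [Real.norm_eq_abs, abs_of_nonneg (Real.rpow_nonneg (by linarith [ht.1]) _)]
    exact Real.rpow_le_one_of_one_le_of_nonpos (by linarith [ht.1]) (by linarith)
  have h2 : IntegrableOn (fun t : ℝ => (1 + t) ^ (-a)) (Ioi (1:ℝ)) := by
    refine Integrable.mono' (integrableOn_Ioi_rpow_of_lt (by linarith : -a < -1) one_pos)
      hmeas.aestronglyMeasurable.restrict ?_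
    filter_upwards [ae_restrict_mem measurableSet_Ioi] with t ht
    rw [Real.norm_eq_abs, abs_of_nonneg (Real.rpow_nonneg (by simp at ht; linarith) _)]
    have ht1 : (1:ℝ) < t := ht
    exact Real.rpow_le_rpow_of_nonpos (by linarith) (by linarith) (by linarith)
  have := h1.union h2
  rwa [Ioc_union_Ioi_eq_Ioi zero_le_one] at this

/-- there is a constant `C'` depending only on `C, β, m, m', k` such that
for any family `(μ_t^x)` and `μ` satisfying the moment and mixing bounds, and any Borel `f`
with `|f(y)| ≤ C(1+|y|^β)`, one has `∫_0^∞ |∫ f dμ_t^x − ∫ f dμ| dt ≤ C'(1+|x|^{m'})`;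
in particular `t ↦ |∫ f dμ_t^x − ∫ f dμ|` is integrable on `[0,∞)`. -/
theorem stmt0
    (d : ℕ) (hd : 1 ≤ d)
    (C β m m' k : ℝ) (hC : 1 ≤ C) (hβ : 0 ≤ β) (hβm : β < m) (hmm' : m ≤ m')
    (hk : 0 < k) (hk1 : 1 < (k + 1) * (1 - β / m)) :
    ∃ C' : ℝ,
      ∀ (P : ℝ → EuclideanSpace ℝ (Fin d) → Measure (EuclideanSpace ℝ (Fin d)))
        (μ : Measure (EuclideanSpace ℝ (Fin d))),
        (∀ t x, 0 ≤ t → IsProbabilityMeasure (P t x)) →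
        IsProbabilityMeasure μ →
        (∀ E : Set (EuclideanSpace ℝ (Fin d)), MeasurableSet E →
          Measurable (fun p : ℝ × EuclideanSpace ℝ (Fin d) => P p.1 p.2 E)) →
        (∀ t x, 0 ≤ t →
          ∫⁻ y, ENNReal.ofReal (‖y‖ ^ m) ∂(P t x) ≤ ENNReal.ofReal (C * (1 + ‖x‖ ^ m'))) →
        (∫⁻ y, ENNReal.ofReal (‖y‖ ^ m) ∂μ ≤ ENNReal.ofReal C) →
        (∀ t x, 0 ≤ t →
          tvNorm (P t x) μ ≤ C * (1 + ‖x‖ ^ m) * (1 + t) ^ (-(k + 1))) →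
        ∀ f : EuclideanSpace ℝ (Fin d) → ℝ, Measurable f →
          (∀ y, |f y| ≤ C * (1 + ‖y‖ ^ β)) →
          ∀ x,
            IntegrableOn (fun t => |(∫ y, f y ∂(P t x)) - ∫ y, f y ∂μ|) (Ioi (0 : ℝ)) ∧
            (∫ t in Ioi (0 : ℝ), |(∫ y, f y ∂(P t x)) - ∫ y, f y ∂μ|)
              ≤ C' * (1 + ‖x‖ ^ m') := by
  have hm0 : 0 < m := lt_of_le_of_lt hβ hβm
  set a : ℝ := (k + 1) * (1 - β / m) with ha_def
  have ha : 1 < a := hk1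
  refine ⟨8 * C ^ 2 * ∫ t in Ioi (0:ℝ), (1 + t) ^ (-a), ?_⟩
  intro P μ hP hμ hmeasP hmomP hmomμ hTV f hf hfb x
  have hxm' : (0:ℝ) ≤ ‖x‖ ^ m' := Real.rpow_nonneg (norm_nonneg _) _
  have hxm0 : (0:ℝ) ≤ ‖x‖ ^ m := Real.rpow_nonneg (norm_nonneg _) _
  have hxm : ‖x‖ ^ m ≤ 1 + ‖x‖ ^ m' := by
    rcases le_or_gt ‖x‖ 1 with h | h
    · have := Real.rpow_le_one (norm_nonneg _) h hm0.le
      linarith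
    · have := Real.rpow_le_rpow_of_exponent_le h.le hmm'
      linarith
  set K : ℝ := 8 * C ^ 2 * (1 + ‖x‖ ^ m') with hK_def
  -- the pointwise bound
  have hbound : ∀ t : ℝ, 0 ≤ t →
      |(∫ y, f y ∂(P t x)) - ∫ y, f y ∂μ| ≤ K * (1 + t) ^ (-a) := by
    intro t ht
    haveI := hP t x ht
    have hu : (0:ℝ) < 1 + t := by linarith
    set R : ℝ := (1 + t) ^ ((k + 1) / m) with hR_def
    have hR : 1 ≤ R := Real.one_le_rpow (by linarith) (by positivity)
    have hM₁ : (0:ℝ) ≤ C * (1 + ‖x‖ ^ m') := by nlinarith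
    have hper := per_t (P t x) μ hC hβ hβm hR hM₁ (by linarith : (0:ℝ) ≤ C)
      (hmomP t x ht) hmomμ (hTV t x ht) hf hfb
    have e1 : R ^ β * (1 + t) ^ (-(k + 1)) = (1 + t) ^ (-a) := by
      rw [hR_def, ← Real.rpow_mul hu.le, ← Real.rpow_add hu]
      congr 1
      rw [ha_def]
      exact exp_aux1 k β m hm0.ne' 
    have e2 : R ^ (β - m) = (1 + t) ^ (-a) := by
      rw [hR_def, ← Real.rpow_mul hu.le]
      congr 1
      rw [ha_def]
      exact exp_aux2 k β m hm0.ne' 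
    have hua : (0:ℝ) ≤ (1 + t) ^ (-a) := Real.rpow_nonneg hu.le _
    calc |(∫ y, f y ∂(P t x)) - ∫ y, f y ∂μ|
        ≤ (2 * C * R ^ β) * (C * (1 + ‖x‖ ^ m) * (1 + t) ^ (-(k + 1)))
          + (2 * C * R ^ (β - m)) * ((C * (1 + ‖x‖ ^ m')) + C) := hper
      _ = 2 * C ^ 2 * (1 + ‖x‖ ^ m) * (R ^ β * (1 + t) ^ (-(k + 1)))
          + 2 * C * ((C * (1 + ‖x‖ ^ m')) + C) * R ^ (β - m) := by ring
      _ = 2 * C ^ 2 * (1 + ‖x‖ ^ m) * (1 + t) ^ (-a)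
          + 2 * C * ((C * (1 + ‖x‖ ^ m')) + C) * (1 + t) ^ (-a) := by rw [e1, e2]
      _ ≤ K * (1 + t) ^ (-a) := by
          rw [hK_def]
          have h1 : 2 * C ^ 2 * (1 + ‖x‖ ^ m) + 2 * C * ((C * (1 + ‖x‖ ^ m')) + C)
              ≤ 8 * C ^ 2 * (1 + ‖x‖ ^ m') := by nlinarith
          nlinarith
  -- measurability
  let κ : ProbabilityTheory.Kernel ℝ (EuclideanSpace ℝ (Fin d)) :=
    ⟨fun t => P (max t 0) x, Measure.measurable_of_measurable_coe _ (fun E hE =>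
      (hmeasP E hE).comp ((measurable_id.max measurable_const).prodMk measurable_const))⟩
  haveI : ProbabilityTheory.IsMarkovKernel κ := ⟨fun t => hP (max t 0) x (le_max_right _ _)⟩
  have hmeasI : Measurable fun t => ∫ y, f y ∂(κ t) := by
    have hfsm : StronglyMeasurable (Function.uncurry fun (_ : ℝ) y => f y) :=
      hf.stronglyMeasurable.comp_measurable measurable_snd
    exact (MeasureTheory.StronglyMeasurable.integral_kernel_prod_right
      (κ := κ) hfsm).measurable
  have hκ : ∀ s : ℝ, κ s = P (max s 0) x := fun s => rfl
  have hG : Measurable fun t : ℝ => |(∫ y, f y ∂(κ t)) - ∫ y, f y ∂μ| := by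
    apply Measurable.abs
    exact hmeasI.sub measurable_const
  have hDasm : AEStronglyMeasurable (fun t => |(∫ y, f y ∂(P t x)) - ∫ y, f y ∂μ|)
      (volume.restrict (Ioi (0:ℝ))) := by
    refine AEStronglyMeasurable.congr (hG.aestronglyMeasurable.restrict) ?_
    filter_upwards [ae_restrict_mem measurableSet_Ioi] with t ht
    have hmax : max t 0 = t := max_eq_left (le_of_lt ht)
    rw [hκ t, hmax]
  have hφ : IntegrableOn (fun t : ℝ => K * (1 + t) ^ (-a)) (Ioi (0:ℝ)) :=
    (integrable_one_add_rpow ha).const_mul K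
  have hDint : IntegrableOn (fun t => |(∫ y, f y ∂(P t x)) - ∫ y, f y ∂μ|) (Ioi (0:ℝ)) := by
    refine Integrable.mono' hφ hDasm ?_
    filter_upwards [ae_restrict_mem measurableSet_Ioi] with t ht
    rw [Real.norm_eq_abs, abs_abs]
    exact hbound t (le_of_lt ht)
  refine ⟨hDint, ?_⟩
  calc (∫ t in Ioi (0:ℝ), |(∫ y, f y ∂(P t x)) - ∫ y, f y ∂μ|)
      ≤ ∫ t in Ioi (0:ℝ), K * (1 + t) ^ (-a) :=
        setIntegral_mono_on hDint hφ measurableSet_Ioi (fun t ht => hbound t (le_of_lt ht))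
    _ = K * ∫ t in Ioi (0:ℝ), (1 + t) ^ (-a) := integral_const_mul _ _
    _ = 8 * C ^ 2 * (∫ t in Ioi (0:ℝ), (1 + t) ^ (-a)) * (1 + ‖x‖ ^ m') := by
        rw [hK_def]; ring
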